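/- Let L/K be a finite Galois field extension of characteristic-zero fields, and let D: K → K be a derivation. Then there exists a unique derivation D̃: L → L extending D, and D̃ commutes with every element of the Galois group: σ ∘ D̃ = D̃ ∘ σ for all σ ∈ Gal(L/K). -/

import Mathlib

open Polynomial IntermediateField

section
variable {K L : Type*} [Field K] [Field L] [Algebra K L] [CharZero K] [CharZero L]

/-- `f ↦ (f^D)(α)`: apply `D` to coefficients, then evaluate at `α`. -/
noncomputable def dpoly (D : Derivation ℚ K K) (α : L) : K[X] →ₗ[ℚ] L :=
  ((PolynomialModule.eval α).restrictScalars ℚ).comp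
    ((((PolynomialModule.map L (Algebra.linearMap K L))).restrictScalars ℚ).comp
      D.mapCoeffs.toLinearMap)

lemma dpoly_apply (D : Derivation ℚ K K) (α : L) (f : K[X]) :
    dpoly D α f = PolynomialModule.eval α
      (PolynomialModule.map L (Algebra.linearMap K L) (D.mapCoeffs f)) := rfl

lemma dpoly_mul (D : Derivation ℚ K K) (α : L) (f g : K[X]) :
    dpoly D α (f * g) = aeval α f * dpoly D α g + aeval α g * dpoly D α f := by
  simp only [dpoly_apply, Derivation.leibniz, map_add, PolynomialModule.map_smul,
    PolynomialModule.eval_smul, smul_eq_mul, eval_map, ← aeval_def]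
  try ring

lemma dpoly_C (D : Derivation ℚ K K) (α : L) (a : K) :
    dpoly D α (C a) = algebraMap K L (D a) := by
  simp [dpoly_apply]

/-- Any derivation on `L` extending `D` satisfies the chain-rule identity. -/
lemma derivation_aeval (D : Derivation ℚ K K) (D' : Derivation ℚ L L)
    (hD' : ∀ x : K, D' (algebraMap K L x) = algebraMap K L (D x)) (y : L) (f : K[X]) :
    D' (aeval y f) = dpoly D y f + aeval y (derivative f) * D' y := by
  have := Derivation.apply_aeval_eq' D D' (Algebra.linearMap K L)
    (fun a => (hD' a).symm) y f
  rw [this, dpoly_apply, smul_eq_mul]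

end

section
variable {K L : Type*} [Field K] [Field L] [Algebra K L] [CharZero K] [CharZero L]

noncomputable def Emap (D : Derivation ℚ K K) (α c : L) : K[X] →ₗ[ℚ] L :=
  dpoly D α + (LinearMap.mulLeft ℚ c).comp
    (((aeval α).toLinearMap.restrictScalars ℚ).comp (derivative.restrictScalars ℚ))

lemma Emap_apply (D : Derivation ℚ K K) (α c : L) (f : K[X]) :
    Emap D α c f = dpoly D α f + c * aeval α (derivative f) := rfl

lemma Emap_C (D : Derivation ℚ K K) (α c : L) (a : K) :
    Emap D α c (C a) = algebraMap K L (D a) := by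
  simp [Emap_apply, dpoly_C]

lemma Emap_mul (D : Derivation ℚ K K) (α c : L) (f g : K[X]) :
    Emap D α c (f * g) = aeval α f * Emap D α c g + aeval α g * Emap D α c f := by
  simp only [Emap_apply, dpoly_mul, derivative_mul, map_add, map_mul]
  ring

variable [FiniteDimensional K L] [IsGalois K L]

lemma Emap_minpoly (D : Derivation ℚ K K) (α : L) :
    Emap D α (-(dpoly D α (minpoly K α)) / aeval α (derivative (minpoly K α)))
      (minpoly K α) = 0 := by
  have h := (Algebra.IsSeparable.isSeparable K α).aeval_derivative_ne_zero (minpoly.aeval K α)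
  rw [Emap_apply]
  field_simp
  ring

lemma Emap_ker (D : Derivation ℚ K K) (α : L) (f : K[X]) (hf : aeval α f = 0) :
    Emap D α (-(dpoly D α (minpoly K α)) / aeval α (derivative (minpoly K α))) f = 0 := by
  obtain ⟨q, rfl⟩ := minpoly.dvd K α hf
  rw [Emap_mul, minpoly.aeval, Emap_minpoly, zero_mul, mul_zero, add_zero]

end


section
set_option linter.unusedSectionVars false
variable {K L : Type*} [Field K] [Field L] [Algebra K L] [CharZero K] [CharZero L]
  [FiniteDimensional K L] [IsGalois K L]

lemma aeval_surj (α : L) (h : K⟮α⟯ = ⊤) : Function.Surjective (aeval α : K[X] →ₐ[K] L) := by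
  rw [← AlgHom.range_eq_top, ← Algebra.adjoin_singleton_eq_range_aeval,
    ← adjoin_simple_toSubalgebra_of_isAlgebraic (IsAlgebraic.of_finite K α), h]
  rfl

variable (D : Derivation ℚ K K) (α : L)

noncomputable def cval : L :=
  -(dpoly D α (minpoly K α)) / aeval α (derivative (minpoly K α))

noncomputable def piQ : K[X] →ₗ[ℚ] L := (aeval α).toLinearMap.restrictScalars ℚ

lemma piQ_surj (hα : K⟮α⟯ = ⊤) : Function.Surjective (piQ (K := K) α) := aeval_surj α hα

lemma ker_le : LinearMap.ker (piQ (K := K) α) ≤ LinearMap.ker (Emap D α (cval D α)) := by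
  intro f hf
  simp only [LinearMap.mem_ker] at hf ⊢
  exact Emap_ker D α f hf

noncomputable def Dlin (hα : K⟮α⟯ = ⊤) : L →ₗ[ℚ] L :=
  ((LinearMap.ker (piQ (K := K) α)).liftQ (Emap D α (cval D α)) (ker_le D α)).comp
    (LinearMap.quotKerEquivOfSurjective _ (piQ_surj α hα)).symm.toLinearMap

lemma Dlin_aeval (hα : K⟮α⟯ = ⊤) (f : K[X]) :
    Dlin D α hα (aeval α f) = Emap D α (cval D α) f := by
  have h1 : (LinearMap.quotKerEquivOfSurjective _ (piQ_surj α hα)).symm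
      (piQ (K := K) α f) = Submodule.Quotient.mk f := by
    apply (LinearMap.quotKerEquivOfSurjective _ (piQ_surj α hα)).injective
    rw [LinearEquiv.apply_symm_apply]
    rfl
  show ((LinearMap.ker (piQ (K := K) α)).liftQ (Emap D α (cval D α)) (ker_le D α))
      ((LinearMap.quotKerEquivOfSurjective _ (piQ_surj α hα)).symm (piQ (K := K) α f)) = _
  rw [h1, Submodule.liftQ_apply]

/-- The extension of `D` to `L`, as a derivation. -/
noncomputable def Dext (hα : K⟮α⟯ = ⊤) : Derivation ℚ L L where
  toLinearMap := Dlin D α hα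
  map_one_eq_zero' := by
    have h := Dlin_aeval D α hα 1
    simp only [map_one] at h
    show Dlin D α hα 1 = 0
    rw [h, show (1 : K[X]) = C 1 by simp, Emap_C, Derivation.map_one_eq_zero, map_zero]
  leibniz' a b := by
    obtain ⟨f, rfl⟩ := aeval_surj α hα a
    obtain ⟨g, rfl⟩ := aeval_surj α hα b
    show Dlin D α hα _ = _
    rw [← map_mul, Dlin_aeval, Emap_mul]
    simp only [smul_eq_mul]
    show _ = aeval α f * Dlin D α hα (aeval α g) + aeval α g * Dlin D α hα (aeval α f)
    rw [Dlin_aeval, Dlin_aeval]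

lemma Dext_extends (hα : K⟮α⟯ = ⊤) (x : K) :
    Dext D α hα (algebraMap K L x) = algebraMap K L (D x) := by
  have h := Dlin_aeval D α hα (C x)
  simp only [aeval_C] at h
  show Dlin D α hα _ = _
  rw [h, Emap_C]

/-- Uniqueness of extensions. -/
lemma derivation_unique (D₁ D₂ : Derivation ℚ L L)
    (h₁ : ∀ x : K, D₁ (algebraMap K L x) = algebraMap K L (D x))
    (h₂ : ∀ x : K, D₂ (algebraMap K L x) = algebraMap K L (D x)) : D₁ = D₂ := by
  ext y
  have e₁ := derivation_aeval D D₁ h₁ y (minpoly K y)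
  have e₂ := derivation_aeval D D₂ h₂ y (minpoly K y)
  rw [minpoly.aeval, map_zero] at e₁ e₂
  have hne := (Algebra.IsSeparable.isSeparable K y).aeval_derivative_ne_zero (minpoly.aeval K y)
  exact mul_left_cancel₀ hne (add_left_cancel (e₁.symm.trans e₂))

end

section
variable {K L : Type*} [Field K] [Field L] [Algebra K L] [CharZero K] [CharZero L]

/-- Conjugating a derivation by a Galois automorphism. -/
noncomputable def conjDer (σ : L ≃ₐ[K] L) (D' : Derivation ℚ L L) : Derivation ℚ L L where
  toLinearMap := ((σ.restrictScalars ℚ).toLinearMap.comp D'.toLinearMap).comp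
    (σ.symm.restrictScalars ℚ).toLinearMap
  map_one_eq_zero' := by
    show σ (D' (σ.symm 1)) = 0
    simp
  leibniz' a b := by
    show σ (D' (σ.symm (a * b))) = a • σ (D' (σ.symm b)) + b • σ (D' (σ.symm a))
    rw [map_mul, Derivation.leibniz]
    simp only [smul_eq_mul, map_add, map_mul]
    rw [σ.apply_symm_apply, σ.apply_symm_apply]

lemma conjDer_apply (σ : L ≃ₐ[K] L) (D' : Derivation ℚ L L) (y : L) :
    conjDer σ D' y = σ (D' (σ.symm y)) := rfl

lemma conjDer_extends (σ : L ≃ₐ[K] L) (D' : Derivation ℚ L L) (D : Derivation ℚ K K)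
    (h : ∀ x : K, D' (algebraMap K L x) = algebraMap K L (D x)) (x : K) :
    conjDer σ D' (algebraMap K L x) = algebraMap K L (D x) := by
  rw [conjDer_apply, AlgEquiv.commutes, h, AlgEquiv.commutes]

end



/-- A derivation on a characteristic-zero field `K` extends uniquely to a derivation of any
finite Galois extension `L/K`, and the extension commutes with every element of the Galois
group. -/
theorem derivation_extends_galois (K L : Type*) [Field K] [Field L] [Algebra K L]
    [CharZero K] [CharZero L] [FiniteDimensional K L] [IsGalois K L]
    (D : Derivation ℚ K K) :
    (∃! D' : Derivation ℚ L L,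
        ∀ x : K, D' (algebraMap K L x) = algebraMap K L (D x)) ∧
      ∀ D' : Derivation ℚ L L,
        (∀ x : K, D' (algebraMap K L x) = algebraMap K L (D x)) →
          ∀ (σ : L ≃ₐ[K] L) (y : L), σ (D' y) = D' (σ y) := by
  obtain ⟨α, hα⟩ := Field.exists_primitive_element K L
  constructor
  · exact ⟨Dext D α hα, Dext_extends D α hα,
      fun D' h => derivation_unique D D' (Dext D α hα) h (Dext_extends D α hα)⟩
  · intro D' h σ y
    have key : conjDer σ D' = D' :=
      derivation_unique D (conjDer σ D') D' (conjDer_extends σ D' D h) h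
    have := congrArg (fun d : Derivation ℚ L L => d (σ y)) key
    simpa [conjDer_apply] using this
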